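/- For a finite simple graph G, F_+(G) = 0 if and only if G is a tree. -/

import Mathlib

open SimpleGraph

variable {V : Type*}

/-- One step of the standard zero forcing color-change rule: a blue vertex `u`
whose unique white neighbor is `v` forces `v` to become blue. -/
def zfStep (G : SimpleGraph V) (B : Set V) : Set V :=
  B ∪ {v | v ∉ B ∧ ∃ u ∈ B, G.Adj u v ∧ ∀ w, G.Adj u w → w ∉ B → w = v}

/-- `S` is a zero forcing set: iterating the standard color-change rule from `S`
eventually colors every vertex blue. -/
def IsZeroForcingSet (G : SimpleGraph V) (S : Set V) : Prop :=
  (⋃ n, (zfStep G)^[n] S) = Set.univ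

/-- The failed zero forcing number `F(G)`: the maximum cardinality of a set that
is not a zero forcing set. -/
noncomputable def failedZF (G : SimpleGraph V) : ℕ :=
  sSup {n | ∃ S : Set V, ¬ IsZeroForcingSet G S ∧ S.ncard = n}

/-- The zero forcing number `Z(G)`. -/
noncomputable def zfNumber (G : SimpleGraph V) : ℕ :=
  sInf {n | ∃ S : Set V, IsZeroForcingSet G S ∧ S.ncard = n}

/-- One step of the positive semidefinite color-change rule. -/
def psdStep (G : SimpleGraph V) (B : Set V) : Set V :=
  B ∪ {v | ∃ (hv : v ∉ B), ∃ u ∈ B, G.Adj u v ∧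
        ∀ (w : V) (hw : w ∉ B), G.Adj u w →
          (G.induce {x | x ∉ B}).Reachable ⟨w, hw⟩ ⟨v, hv⟩ → w = v}

/-- `S` is a positive semidefinite zero forcing set. -/
def IsPSDZeroForcingSet (G : SimpleGraph V) (S : Set V) : Prop :=
  (⋃ n, (psdStep G)^[n] S) = Set.univ

/-- The failed positive semidefinite zero forcing number `F₊(G)`. -/
noncomputable def failedPSD (G : SimpleGraph V) : ℕ :=
  sSup {n | ∃ S : Set V, ¬ IsPSDZeroForcingSet G S ∧ S.ncard = n}

/-- The positive semidefinite zero forcing number `Z₊(G)`. -/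
noncomputable def psdZFNumber (G : SimpleGraph V) : ℕ :=
  sInf {n | ∃ S : Set V, IsPSDZeroForcingSet G S ∧ S.ncard = n}

section Aux
variable {G : SimpleGraph V}

/-- From a walk in `G` with support in `S`, get reachability in the induced graph. -/
lemma induce_reach_of_walk {S : Set V} {a b : V} (p : G.Walk a b)
    (hp : ∀ x ∈ p.support, x ∈ S) (ha : a ∈ S) (hb : b ∈ S) :
    (G.induce S).Reachable ⟨a, ha⟩ ⟨b, hb⟩ := by
  induction p with
  | nil => rfl
  | @cons a c b h p ih =>
    have hc : c ∈ S := hp c (by simp)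
    have hadj : (G.induce S).Adj ⟨a, ha⟩ ⟨c, hc⟩ := by
      simpa using h
    exact hadj.reachable.trans (ih (fun x hx => hp x (by simp [hx])) hc hb)

/-- From a walk in the induced graph, get a walk in `G` with support in `S`. -/
lemma walk_of_induce_walk {S : Set V} : ∀ {a b : ↥S} (_ : (G.induce S).Walk a b),
    ∃ q : G.Walk a.1 b.1, ∀ x ∈ q.support, x ∈ S := by
  intro a b p
  induction p with
  | @nil a => exact ⟨.nil, by rintro x hx; simp at hx; subst hx; exact a.2⟩
  | @cons a c b h p ih =>
    obtain ⟨q, hq⟩ := ih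
    have hadj : G.Adj a.1 c.1 := by simpa using h
    refine ⟨.cons hadj q, ?_⟩
    intro x hx
    rcases List.mem_cons.1 (by simpa using hx) with rfl | hx
    · exact a.2
    · exact hq x hx

/-- Trap lemma, one step: if every external neighbor of `K` has at least two
neighbors in the connected set `K`, then no vertex of `K` is ever forced. -/
lemma psdStep_trap {K : Set V}
    (hK2 : ∀ u ∉ K, ∀ v ∈ K, G.Adj u v →
      ∃ w1 ∈ K, ∃ w2 ∈ K, w1 ≠ w2 ∧ G.Adj u w1 ∧ G.Adj u w2)
    (hKwalk : ∀ a ∈ K, ∀ b ∈ K, ∃ p : G.Walk a b, ∀ x ∈ p.support, x ∈ K)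
    {B : Set V} (hB : ∀ x ∈ B, x ∉ K) :
    ∀ x ∈ psdStep G B, x ∉ K := by
  intro x hx hxK
  rcases hx with hx | hx
  · exact hB x hx hxK
  obtain ⟨hv, u, hu, hadj, hall⟩ := hx
  have huK : u ∉ K := hB u hu
  obtain ⟨w1, hw1, w2, hw2, hne, ha1, ha2⟩ := hK2 u huK x hxK hadj
  have : ∃ w ∈ K, w ≠ x ∧ G.Adj u w := by
    by_cases h : w1 = x
    · exact ⟨w2, hw2, fun h2 => hne (h.trans h2.symm), ha2⟩
    · exact ⟨w1, hw1, h, ha1⟩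
  obtain ⟨w, hwK, hwx, hadjw⟩ := this
  have hwB : w ∉ B := fun h => hB w h hwK
  obtain ⟨p, hp⟩ := hKwalk w hwK x hxK
  have hreach : (G.induce {y | y ∉ B}).Reachable ⟨w, hwB⟩ ⟨x, hv⟩ :=
    induce_reach_of_walk p (fun t ht => fun htB => hB t htB (hp t ht)) hwB hv
  exact hwx (hall w hwB hadjw hreach)

lemma iterate_trap {K : Set V}
    (hK2 : ∀ u ∉ K, ∀ v ∈ K, G.Adj u v →
      ∃ w1 ∈ K, ∃ w2 ∈ K, w1 ≠ w2 ∧ G.Adj u w1 ∧ G.Adj u w2)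
    (hKwalk : ∀ a ∈ K, ∀ b ∈ K, ∃ p : G.Walk a b, ∀ x ∈ p.support, x ∈ K)
    {B : Set V} (hB : ∀ x ∈ B, x ∉ K) :
    ∀ n, ∀ x ∈ (psdStep G)^[n] B, x ∉ K := by
  intro n
  induction n with
  | zero => exact hB
  | succ n ih =>
    rw [Function.iterate_succ_apply']
    exact psdStep_trap hK2 hKwalk ih

lemma reach_of_iterate {v : V} :
    ∀ n, ∀ x ∈ (psdStep G)^[n] {v}, G.Reachable v x := by
  intro n
  induction n with
  | zero => rintro x (rfl : x = v); rfl
  | succ n ih =>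
    rw [Function.iterate_succ_apply']
    rintro x (hx | ⟨hv, u, hu, hadj, -⟩)
    · exact ih x hx
    · exact (ih u hu).trans hadj.reachable

/-- If `G` contains a cycle through `x`, then `{x}` is not a PSD forcing set. -/
lemma not_forcing_of_cycle {x : V} {c : G.Walk x x} (hc : c.IsCycle) :
    ¬ IsPSDZeroForcingSet G {x} := by
  cases c with
  | nil => exact absurd rfl hc.ne_nil
  | @cons _ y _ h p =>
    have hxy : x ≠ y := h.ne
    obtain ⟨z, h', q, hq⟩ := Walk.exists_eq_cons_of_ne hxy p.reverse
    have hp_nodup : p.support.Nodup := by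
      have := hc.support_nodup
      simpa [Walk.support_cons] using this
    have hp : p = q.reverse.append (Walk.cons h'.symm Walk.nil) := by
      rw [← Walk.reverse_reverse p, hq, Walk.reverse_cons]
    have hsupp : p.support = q.support.reverse ++ [x] := by
      rw [hp, Walk.support_append]
      simp
    have hnodup2 : q.support.reverse.Nodup ∧ x ∉ q.support.reverse := by
      rw [hsupp, List.nodup_append] at hp_nodup
      exact ⟨hp_nodup.1, fun hx => hp_nodup.2.2 x hx x (List.mem_singleton.2 rfl) rfl⟩
    have hxq : x ∉ q.support := fun hx => hnodup2.2 (List.mem_reverse.2 hx)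
    have hqlen : 1 ≤ q.length := by
      have h3 := hc.three_le_length
      have hlen : p.length = q.length + 1 := by
        rw [hp]
        simp [Walk.length_append]
      simp only [Walk.length_cons] at h3
      omega
    have hyz : y ≠ z := by
      intro hyz
      subst hyz
      have hqpath : q.IsPath := by
        rw [Walk.isPath_def]
        simpa using hnodup2.1
      rw [Walk.isPath_iff_eq_nil] at hqpath
      rw [hqpath] at hqlen
      simp at hqlen
    set K : Set V := {w | ∃ p : G.Walk y w, x ∉ p.support} with hK
    have hyK : y ∈ K := ⟨Walk.nil, by simpa using hxy⟩
    have hzK : z ∈ K := ⟨q.reverse, by simpa using hxq⟩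
    have hxK : x ∉ K := by
      rintro ⟨p', hp'⟩
      exact hp' (Walk.end_mem_support p')
    have hKwalk : ∀ a ∈ K, ∀ b ∈ K, ∃ p : G.Walk a b, ∀ t ∈ p.support, t ∈ K := by
      classical
      rintro a ⟨pa, hpa⟩ b ⟨pb, hpb⟩
      refine ⟨pa.reverse.append pb, ?_⟩
      intro t ht
      rw [Walk.support_append] at ht
      rcases List.mem_append.1 ht with ht | ht
      · rw [Walk.support_reverse, List.mem_reverse] at ht
        exact ⟨pa.takeUntil t ht, fun hx => hpa (Walk.support_takeUntil_subset pa ht hx)⟩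
      · have ht' : t ∈ pb.support := List.mem_of_mem_tail ht
        exact ⟨pb.takeUntil t ht', fun hx => hpb (Walk.support_takeUntil_subset pb ht' hx)⟩
    have hK2 : ∀ u ∉ K, ∀ v ∈ K, G.Adj u v →
        ∃ w1 ∈ K, ∃ w2 ∈ K, w1 ≠ w2 ∧ G.Adj u w1 ∧ G.Adj u w2 := by
      intro u huK v hvK hadj
      have hux : u = x := by
        by_contra hux
        obtain ⟨pv, hpv⟩ := hvK
        refine huK ⟨pv.concat hadj.symm, ?_⟩
        rw [Walk.support_concat]
        intro hx
        rw [List.mem_append] at hx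
        rcases hx with hx | hx
        · exact hpv hx
        · exact hux (List.mem_singleton.1 hx).symm
      subst hux
      exact ⟨y, hyK, z, hzK, hyz, h, h'⟩
    intro hforce
    have hy : y ∈ (⋃ n, (psdStep G)^[n] ({x} : Set V)) := by
      rw [hforce]; trivial
    obtain ⟨n, hn⟩ := Set.mem_iUnion.1 hy
    exact iterate_trap hK2 hKwalk (B := {x})
      (by rintro t (rfl : t = x); exact hxK) n y hn hyK

lemma crossing {B : Set V} : ∀ {a c : V}, G.Walk a c → a ∈ B → c ∉ B →
    ∃ u ∈ B, ∃ v, v ∉ B ∧ G.Adj u v := by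
  intro a c p
  induction p with
  | nil => intro ha hc; exact absurd ha hc
  | @cons a m c h p ih =>
    intro ha hc
    by_cases hm : m ∈ B
    · exact ih hm hc
    · exact ⟨a, ha, m, hm, h⟩

/-- In a connected acyclic graph, any nonempty proper blue set makes a force. -/
lemma exists_forced (hconn : G.Preconnected) (hac : G.IsAcyclic) {B : Set V}
    (hne : B.Nonempty) (hBu : B ≠ Set.univ) : ∃ v, v ∉ B ∧ v ∈ psdStep G B := by
  classical
  obtain ⟨b, hb⟩ := hne
  obtain ⟨c, hc⟩ : ∃ c, c ∉ B := by
    by_contra hcc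
    push_neg at hcc
    exact hBu (Set.eq_univ_of_forall hcc)
  obtain ⟨u, hu, v, hv, hadj⟩ := crossing (hconn b c).some hb hc
  refine ⟨v, hv, Or.inr ⟨hv, u, hu, hadj, ?_⟩⟩
  intro w hw hadjw hreach
  by_contra hwv
  obtain ⟨q, hq⟩ := walk_of_induce_walk hreach.some
  have huv : u ≠ v := fun h => hv (h ▸ hu)
  have hp1 : (Walk.cons hadj Walk.nil : G.Walk u v).IsPath := by
    simp [Walk.isPath_def, huv]
  have hup : u ∉ q.toPath.1.support := by
    intro hmem
    exact (hq u (Walk.support_toPath_subset q hmem)) hu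
  have hp2 : (Walk.cons hadjw q.toPath.1).IsPath := q.toPath.2.cons hup
  have hunique := isAcyclic_iff_path_unique.1 hac ⟨_, hp1⟩ ⟨_, hp2⟩
  have hsupp := congrArg (fun (P : G.Path u v) => P.1.support) hunique
  simp only [Walk.support_cons, Walk.support_nil] at hsupp
  rw [q.toPath.1.support_eq_cons] at hsupp
  simp only [List.cons.injEq, true_and] at hsupp
  exact hwv hsupp.1.symm

/-- In a tree, every nonempty set is a PSD forcing set. -/
lemma forcing_of_tree [Fintype V] (hT : G.IsTree) {S : Set V} (hS : S.Nonempty) :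
    IsPSDZeroForcingSet G S := by
  have key : ∀ n, (psdStep G)^[n] S = Set.univ ∨ n + 1 ≤ ((psdStep G)^[n] S).ncard := by
    intro n
    induction n with
    | zero =>
      right
      exact (Set.ncard_pos (Set.toFinite S)).2 hS
    | succ n ih =>
      rcases ih with h | h
      · left
        rw [Function.iterate_succ_apply', h]
        exact Set.eq_univ_of_univ_subset Set.subset_union_left
      · by_cases hu : (psdStep G)^[n] S = Set.univ
        · left
          rw [Function.iterate_succ_apply', hu]
          exact Set.eq_univ_of_univ_subset Set.subset_union_left
        · right
          obtain ⟨v, hv, hv'⟩ := exists_forced hT.isConnected.preconnected hT.IsAcyclic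
            (Set.nonempty_of_ncard_ne_zero (by omega)) hu
          have hss : (psdStep G)^[n] S ⊂ psdStep G ((psdStep G)^[n] S) :=
            ⟨Set.subset_union_left, fun hsub => hv (hsub hv')⟩
          have := Set.ncard_lt_ncard hss (Set.toFinite _)
          rw [Function.iterate_succ_apply']
          omega
  rcases key (Fintype.card V) with h | h
  · apply Set.eq_univ_of_univ_subset
    rw [← h]
    exact Set.subset_iUnion (fun n => (psdStep G)^[n] S) (Fintype.card V)
  · exfalso
    have hle : ((psdStep G)^[Fintype.card V] S).ncard ≤ Fintype.card V := by
      have := Set.ncard_le_ncard (Set.subset_univ ((psdStep G)^[Fintype.card V] S))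
        (Set.toFinite _)
      rwa [Set.ncard_univ, Nat.card_eq_fintype_card] at this
    omega

end Aux

/-- `F₊(G) = 0` iff `G` is a tree. -/
theorem failedPSD_eq_zero_iff_isTree [Fintype V] [Nonempty V] (G : SimpleGraph V) :
    failedPSD G = 0 ↔ G.IsTree := by
  have hempty_fail : ¬ IsPSDZeroForcingSet G (∅ : Set V) := by
    have hfix : ∀ n, (psdStep G)^[n] (∅ : Set V) = ∅ := by
      intro n
      apply Function.iterate_fixed
      simp [psdStep]
    intro h
    rw [IsPSDZeroForcingSet] at h
    simp only [hfix, Set.iUnion_empty] at h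
    exact Set.empty_ne_univ h
  constructor
  · intro h0
    have hforce : ∀ S : Set V, S.Nonempty → IsPSDZeroForcingSet G S := by
      intro S hS
      by_contra hnf
      have hbdd : BddAbove {n | ∃ S : Set V, ¬ IsPSDZeroForcingSet G S ∧ S.ncard = n} := by
        refine ⟨Fintype.card V, ?_⟩
        rintro n ⟨T, -, rfl⟩
        have := Set.ncard_le_ncard (Set.subset_univ T) (Set.toFinite _)
        rwa [Set.ncard_univ, Nat.card_eq_fintype_card] at this
      have h1 : S.ncard ≤ failedPSD G := le_csSup hbdd ⟨S, hnf, rfl⟩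
      rw [h0] at h1
      have := (Set.ncard_pos (Set.toFinite S)).2 hS
      omega
    refine ⟨?_, ?_⟩
    · constructor
      intro a b
      have h := hforce {a} ⟨a, rfl⟩
      have hb : b ∈ ⋃ n, (psdStep G)^[n] ({a} : Set V) := by rw [h]; trivial
      obtain ⟨n, hn⟩ := Set.mem_iUnion.1 hb
      exact reach_of_iterate n b hn
    · intro v c hc
      exact not_forcing_of_cycle hc (hforce {v} ⟨v, rfl⟩)
  · intro hT
    have hset : {n | ∃ S : Set V, ¬ IsPSDZeroForcingSet G S ∧ S.ncard = n} = {0} := by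
      ext n
      simp only [Set.mem_setOf_eq, Set.mem_singleton_iff]
      constructor
      · rintro ⟨S, hnf, rfl⟩
        rcases Set.eq_empty_or_nonempty S with rfl | hS
        · simp
        · exact absurd (forcing_of_tree hT hS) hnf
      · rintro rfl
        exact ⟨∅, hempty_fail, Set.ncard_empty V⟩
    rw [failedPSD, hset, csSup_singleton]
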